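/- Let A₁, B₁, A₂, B₂ > 0 and consider the system B₂x³ + A₂xy² = x, B₁x²y + A₁y³ = y on the domain Δ = {(x,y) ∈ ℝ²₊ : x > y}. If B₁ ≤ B₂ and A₁ < A₂, then the unique solution in Δ is (x,y) = (1/√B₂, 0). If B₁ > B₂ and A₁ < A₂, then the solutions in Δ are exactly (1/√B₂, 0) and (√(DE), √E), where D = (A₂-A₁)/(B₁-B₂) and E = 1/(A₂ + D·B₂), provided D > 1. -/

import Mathlib

set_option maxHeartbeats 1000000 in
theorem stmt_14 (A₁ B₁ A₂ B₂ : ℝ)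
    (hA₁ : 0 < A₁) (hB₁ : 0 < B₁) (hA₂ : 0 < A₂) (hB₂ : 0 < B₂) :
    (B₁ ≤ B₂ → A₁ < A₂ →
      ∀ x y : ℝ, 0 ≤ y → y < x →
        ((B₂ * x ^ 3 + A₂ * x * y ^ 2 = x ∧ B₁ * x ^ 2 * y + A₁ * y ^ 3 = y) ↔
          (x = 1 / Real.sqrt B₂ ∧ y = 0))) ∧
    (B₂ < B₁ → A₁ < A₂ → 1 < (A₂ - A₁) / (B₁ - B₂) →
      ∀ x y : ℝ, 0 ≤ y → y < x →
        ((B₂ * x ^ 3 + A₂ * x * y ^ 2 = x ∧ B₁ * x ^ 2 * y + A₁ * y ^ 3 = y) ↔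
          ((x = 1 / Real.sqrt B₂ ∧ y = 0) ∨
           (x = Real.sqrt (((A₂ - A₁) / (B₁ - B₂)) *
                  (1 / (A₂ + ((A₂ - A₁) / (B₁ - B₂)) * B₂))) ∧
            y = Real.sqrt (1 / (A₂ + ((A₂ - A₁) / (B₁ - B₂)) * B₂)))))) := by
  -- facts about the point (1/√B₂, 0)
  have hsB : (0:ℝ) < Real.sqrt B₂ := Real.sqrt_pos.mpr hB₂
  have hsq : (1 / Real.sqrt B₂) ^ 2 = 1 / B₂ := by
    rw [div_pow, one_pow, Real.sq_sqrt hB₂.le]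
  have hx0eq : ∀ x : ℝ, 0 < x → x ^ 2 = 1 / B₂ → x = 1 / Real.sqrt B₂ := by
    intro x hx h
    have : x = Real.sqrt (1 / B₂) := by
      rw [← h, Real.sqrt_sq hx.le]
    rw [this, one_div, one_div, Real.sqrt_inv]
  have hbase : B₂ * (1 / Real.sqrt B₂) ^ 3 + A₂ * (1 / Real.sqrt B₂) * (0:ℝ) ^ 2
      = 1 / Real.sqrt B₂ ∧ B₁ * (1 / Real.sqrt B₂) ^ 2 * 0 + A₁ * (0:ℝ) ^ 3 = 0 := by
    constructor
    · have : (1 / Real.sqrt B₂) ^ 3 = (1 / Real.sqrt B₂) ^ 2 * (1 / Real.sqrt B₂) := by ring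
      rw [this, hsq]
      field_simp
      ring
    · ring
  constructor
  · intro hB hA x y hy hyx
    have hx : 0 < x := lt_of_le_of_lt hy hyx
    constructor
    · rintro ⟨h1, h2⟩
      have e1 : B₂ * x ^ 2 + A₂ * y ^ 2 = 1 := by
        have h : x * (B₂ * x ^ 2 + A₂ * y ^ 2) = x * 1 := by ring_nf; ring_nf at h1; linarith
        exact mul_left_cancel₀ hx.ne' h
      have hy0 : y = 0 := by
        by_contra h
        have hy' : 0 < y := lt_of_le_of_ne hy (Ne.symm h)
        have e2 : B₁ * x ^ 2 + A₁ * y ^ 2 = 1 := by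
          have h : y * (B₁ * x ^ 2 + A₁ * y ^ 2) = y * 1 := by ring_nf; ring_nf at h2; linarith
          exact mul_left_cancel₀ hy'.ne' h
        nlinarith [mul_pos hx hx, mul_pos hy' hy', sq_nonneg x, sq_nonneg y]
      subst hy0
      refine ⟨hx0eq x hx ?_, rfl⟩
      have : B₂ * x ^ 2 = 1 := by nlinarith
      field_simp
      linarith
    · rintro ⟨hxe, hye⟩
      subst hxe; subst hye
      exact hbase
  · intro hB hA hD x y hy hyx
    have hx : 0 < x := lt_of_le_of_lt hy hyx
    set D := (A₂ - A₁) / (B₁ - B₂) with hDdef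
    have hBB : 0 < B₁ - B₂ := sub_pos.mpr hB
    have hDpos : 0 < D := lt_trans one_pos hD
    have hDeq : D * (B₁ - B₂) = A₂ - A₁ := by
      rw [hDdef]; field_simp
    have hden : 0 < A₂ + D * B₂ := by positivity
    set E := 1 / (A₂ + D * B₂) with hEdef
    have hE : 0 < E := by positivity
    have hEeq : E * (A₂ + D * B₂) = 1 := by
      rw [hEdef]; field_simp
    clear_value D E
    constructor
    · rintro ⟨h1, h2⟩
      have e1 : B₂ * x ^ 2 + A₂ * y ^ 2 = 1 := by
        have h : x * (B₂ * x ^ 2 + A₂ * y ^ 2) = x * 1 := by ring_nf; ring_nf at h1; linarith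
        exact mul_left_cancel₀ hx.ne' h
      rcases eq_or_lt_of_le hy with h0 | hy'
      · left
        have hy0 : y = 0 := h0.symm
        subst hy0
        refine ⟨hx0eq x hx ?_, rfl⟩
        have : B₂ * x ^ 2 = 1 := by nlinarith
        field_simp
        linarith
      · right
        have e2 : B₁ * x ^ 2 + A₁ * y ^ 2 = 1 := by
          have h : y * (B₁ * x ^ 2 + A₁ * y ^ 2) = y * 1 := by ring_nf; ring_nf at h2; linarith
          exact mul_left_cancel₀ hy'.ne' h
        have hx2 : x ^ 2 = D * y ^ 2 := by
          have hsub : (B₁ - B₂) * x ^ 2 = (A₂ - A₁) * y ^ 2 := by linarith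
          have : (B₁ - B₂) * x ^ 2 = (B₁ - B₂) * (D * y ^ 2) := by
            rw [hsub]; linear_combination (-y ^ 2) * hDeq
          exact mul_left_cancel₀ hBB.ne' this
        have hy2 : y ^ 2 = E := by
          have h' : y ^ 2 * (A₂ + D * B₂) = E * (A₂ + D * B₂) := by
            rw [hEeq]; rw [hx2] at e1; linear_combination e1
          exact mul_right_cancel₀ hden.ne' h'
        have hxx : x ^ 2 = D * E := by rw [hx2, hy2]
        constructor
        · rw [← hxx, Real.sqrt_sq hx.le]
        · rw [← hy2, Real.sqrt_sq hy'.le]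
    · rintro (⟨hxe, hye⟩ | ⟨hxe, hye⟩)
      · subst hxe; subst hye; exact hbase
      · have hx2 : x ^ 2 = D * E := by
          rw [hxe, Real.sq_sqrt (by positivity)]
        have hy2 : y ^ 2 = E := by
          rw [hye, Real.sq_sqrt hE.le]
        have hA1 : A₁ + B₁ * D = A₂ + B₂ * D := by linear_combination hDeq
        constructor
        · have : B₂ * x ^ 2 + A₂ * y ^ 2 = 1 := by
            rw [hx2, hy2]; nlinarith [hEeq]
          nlinarith [this]
        · have : B₁ * x ^ 2 + A₁ * y ^ 2 = 1 := by
            rw [hx2, hy2]; nlinarith [hEeq, hA1, hE]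
          nlinarith [this]
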